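/- Let N ≥ 2, let G be an N×N symmetric positive semidefinite real matrix with G e = 0 and such that uᵀGu = 0 implies u is a scalar multiple of e, let σ ∈ (0, 1], and let f : ℝ^N → ℝ be differentiable, attain its minimum value f* over S, and satisfy f(x) ≥ f(y) + ⟨∇f(y), x − y⟩ + (σ/2) (‖x − y‖*_G)² for all x, y ∈ S. Let (Ω, 𝓕, μ) be a probability space with a filtration (𝓕_k)_{k≥0}, let x⁰ ∈ S, and let (X_k)_{k≥0} be an adapted sequence of ℝ^N-valued random variables with X_0 = x⁰ almost surely, each f(X_k) integrable, and, almost surely for every k: X_k ∈ S and E[f(X_{k+1}) | 𝓕_k] ≤ f(X_k) − (1/2) ∇f(X_k)ᵀ G ∇f(X_k). Then for every k ≥ 0, E[f(X_k)] − f* ≤ (1 − σ)^k (f(x⁰) − f*). -/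

import Mathlib

open MeasureTheory

/-- The gradient of `f : (Fin N → ℝ) → ℝ` at `x`, as a vector. -/
noncomputable def gradVec (N : ℕ) (f : (Fin N → ℝ) → ℝ) (x : Fin N → ℝ) :
    Fin N → ℝ :=
  fun i => fderiv ℝ f x (Pi.single i 1)


noncomputable def quadQ {N : ℕ} (G : Matrix (Fin N) (Fin N) ℝ) (u : Fin N → ℝ) : ℝ :=
  ∑ i, ∑ j, u i * G i j * u j

lemma quadQ_nonneg {N : ℕ} (G : Matrix (Fin N) (Fin N) ℝ) (hpsd : G.PosSemidef)
    (u : Fin N → ℝ) : 0 ≤ quadQ G u := by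
  have h := hpsd.dotProduct_mulVec_nonneg u
  have heq : dotProduct (star u) (G.mulVec u) = quadQ G u := by
    simp [dotProduct, Matrix.mulVec, quadQ, Finset.mul_sum, mul_assoc]
  rwa [heq] at h

lemma quadQ_smul {N : ℕ} (G : Matrix (Fin N) (Fin N) ℝ) (c : ℝ) (u : Fin N → ℝ) :
    quadQ G (fun i => c * u i) = c ^ 2 * quadQ G u := by
  simp only [quadQ, Finset.mul_sum]
  apply Finset.sum_congr rfl; intro i _
  apply Finset.sum_congr rfl; intro j _
  ring

lemma rowsum_zero {N : ℕ} (G : Matrix (Fin N) (Fin N) ℝ)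
    (hGe : G.mulVec (fun _ => (1 : ℝ)) = 0) (i : Fin N) :
    ∑ j, G i j = 0 := by
  have := congrFun hGe i
  simpa [Matrix.mulVec, dotProduct] using this

lemma colsum_zero {N : ℕ} (G : Matrix (Fin N) (Fin N) ℝ) (hsym : G.IsSymm)
    (hGe : G.mulVec (fun _ => (1 : ℝ)) = 0) (j : Fin N) :
    ∑ i, G i j = 0 := by
  have h : ∀ i, G i j = G j i := fun i => by
    conv_lhs => rw [← hsym]
    rfl
  simp only [h]
  exact rowsum_zero G hGe j

lemma quadQ_shift {N : ℕ} (G : Matrix (Fin N) (Fin N) ℝ) (hsym : G.IsSymm)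
    (hGe : G.mulVec (fun _ => (1 : ℝ)) = 0)
    (u : Fin N → ℝ) (c : ℝ) : quadQ G (fun i => u i + c) = quadQ G u := by
  have hrow := rowsum_zero G hGe
  have hcol := colsum_zero G hsym hGe
  have expand : ∀ i, ∑ j, (u i + c) * G i j * (u j + c)
      = (∑ j, u i * G i j * u j) + (c * ∑ j, G i j * u j) + ((u i + c) * c * ∑ j, G i j) := by
    intro i
    rw [Finset.mul_sum, Finset.mul_sum, ← Finset.sum_add_distrib, ← Finset.sum_add_distrib]
    apply Finset.sum_congr rfl; intro j _; ring
  simp only [quadQ, expand]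
  rw [Finset.sum_add_distrib, Finset.sum_add_distrib]
  have h1 : ∑ i, c * ∑ j, G i j * u j = c * ∑ j, (∑ i, G i j) * u j := by
    rw [← Finset.mul_sum, Finset.sum_comm]
    congr 1
    apply Finset.sum_congr rfl; intro j _
    rw [Finset.sum_mul]
  have h2 : ∀ i, (u i + c) * c * ∑ j, G i j = 0 := fun i => by rw [hrow]; ring
  simp [h1, h2, hcol]

lemma coercive {N : ℕ} (hN : 2 ≤ N) (G : Matrix (Fin N) (Fin N) ℝ)
    (hpsd : G.PosSemidef)
    (hker : ∀ u : Fin N → ℝ, (∑ i, ∑ j, u i * G i j * u j) = 0 →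
      ∃ c : ℝ, u = fun _ => c) :
    ∃ m : ℝ, 0 < m ∧ ∀ u : Fin N → ℝ, (∑ i, u i = 0) →
      m * (∑ i, (u i) ^ 2) ≤ quadQ G u := by
  haveI : NeZero N := ⟨by omega⟩
  set K : Set (Fin N → ℝ) := {u | (∑ i, u i = 0) ∧ (∑ i, (u i) ^ 2 = 1)} with hK
  have hQcont : Continuous (quadQ G) := by
    apply continuous_finset_sum; intro i _
    apply continuous_finset_sum; intro j _
    exact ((continuous_apply i).mul continuous_const).mul (continuous_apply j)
  have hclosed : IsClosed K := by
    have h1 : IsClosed ((fun u : Fin N → ℝ => ∑ i, u i) ⁻¹' {0}) :=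
      isClosed_singleton.preimage (continuous_finset_sum _ fun i _ => continuous_apply i)
    have h2 : IsClosed ((fun u : Fin N → ℝ => ∑ i, (u i) ^ 2) ⁻¹' {1}) :=
      isClosed_singleton.preimage (continuous_finset_sum _ fun i _ => (continuous_apply i).pow 2)
    have : K = (fun u : Fin N → ℝ => ∑ i, u i) ⁻¹' {0} ∩
        (fun u : Fin N → ℝ => ∑ i, (u i) ^ 2) ⁻¹' {1} := by
      ext u; simp [hK, Set.mem_inter_iff]
    rw [this]; exact h1.inter h2
  have hsub : K ⊆ Metric.closedBall 0 1 := by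
    intro u hu
    rw [Metric.mem_closedBall, dist_zero_right]
    refine pi_norm_le_iff_of_nonneg zero_le_one |>.2 fun i => ?_
    have hle : (u i) ^ 2 ≤ 1 := by
      rw [← hu.2]
      exact Finset.single_le_sum (fun j _ => sq_nonneg (u j)) (Finset.mem_univ i)
    rw [Real.norm_eq_abs]
    nlinarith [abs_nonneg (u i), sq_abs (u i)]
  have hcompact : IsCompact K :=
    (isCompact_closedBall (0 : Fin N → ℝ) 1).of_isClosed_subset hclosed hsub
  -- nonemptiness
  have h01 : (0 : Fin N) ≠ (1 : Fin N) := by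
    intro h
    have := congrArg Fin.val h
    simp [Fin.val_zero, Fin.val_one'] at this
    omega
  have hne : K.Nonempty := by
    set a : ℝ := Real.sqrt (1 / 2) with ha
    have ha2 : a ^ 2 = 1 / 2 := Real.sq_sqrt (by norm_num)
    refine ⟨(fun j => (Pi.single (0 : Fin N) a : Fin N → ℝ) j + (Pi.single (1 : Fin N) (-a) : Fin N → ℝ) j), ?_, ?_⟩
    · simp only []
      rw [Finset.sum_add_distrib, Finset.sum_pi_single', Finset.sum_pi_single']
      simp
    · simp only []
      have hpt : ∀ j, ((Pi.single (0 : Fin N) a : Fin N → ℝ) j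
            + (Pi.single (1 : Fin N) (-a) : Fin N → ℝ) j) ^ 2
          = (Pi.single (0 : Fin N) (a ^ 2) : Fin N → ℝ) j
            + (Pi.single (1 : Fin N) (a ^ 2) : Fin N → ℝ) j := by
        intro j
        by_cases h0 : j = 0
        · subst h0; simp [Pi.single_apply, h01.symm, (Ne.symm h01)]
        · by_cases h1 : j = 1
          · subst h1; simp [Pi.single_apply, h01, Ne.symm h01]
          · simp [Pi.single_apply, h0, h1]
      simp only [hpt]
      rw [Finset.sum_add_distrib, Finset.sum_pi_single', Finset.sum_pi_single']
      simp [ha2]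
      norm_num
  obtain ⟨u₀, hu₀K, hmin⟩ := hcompact.exists_isMinOn hne hQcont.continuousOn
  refine ⟨quadQ G u₀, ?_, ?_⟩
  · rcases lt_or_eq_of_le (quadQ_nonneg G hpsd u₀) with h | h
    · exact h
    · exfalso
      obtain ⟨c, hc⟩ := hker u₀ h.symm
      have hsum : ∑ i, u₀ i = 0 := hu₀K.1
      rw [hc] at hsum
      simp [Finset.sum_const, Finset.card_univ] at hsum
      have hc0 : c = 0 := by
        rcases hsum with h' | h'
        · omega
        · exact h'
      have := hu₀K.2
      rw [hc, hc0] at this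
      simp at this
  · intro u hu
    rcases eq_or_lt_of_le (Finset.sum_nonneg fun i _ => sq_nonneg (u i) :
        (0:ℝ) ≤ ∑ i, (u i)^2) with hs | hs
    · rw [← hs, mul_zero]; exact quadQ_nonneg G hpsd u
    · set t : ℝ := Real.sqrt (∑ i, (u i) ^ 2) with ht
      have ht0 : 0 < t := Real.sqrt_pos.2 hs
      have ht2 : t ^ 2 = ∑ i, (u i) ^ 2 := Real.sq_sqrt hs.le
      have hvK : (fun i => t⁻¹ * u i) ∈ K := by
        constructor
        · show (∑ i, t⁻¹ * u i) = 0
          rw [← Finset.mul_sum, hu, mul_zero]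
        · show (∑ i, (t⁻¹ * u i) ^ 2) = 1
          have : ∀ i, (t⁻¹ * u i) ^ 2 = t⁻¹ ^ 2 * (u i) ^ 2 := fun i => by ring
          simp only [this]
          rw [← Finset.mul_sum, ← ht2]
          field_simp
      have hle : quadQ G u₀ ≤ quadQ G (fun i => t⁻¹ * u i) := hmin hvK
      rw [quadQ_smul G t⁻¹ u] at hle
      have ht2' : t⁻¹ ^ 2 = (∑ i, (u i)^2)⁻¹ := by rw [← ht2]; simp
      rw [ht2'] at hle
      have hfin := mul_le_mul_of_nonneg_right hle hs.le
      have hcancel : (∑ i, (u i)^2)⁻¹ * quadQ G u * (∑ i, (u i)^2) = quadQ G u := by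
        field_simp
      linarith

lemma bddAbove_dualSet {N : ℕ} (hN : 2 ≤ N) (G : Matrix (Fin N) (Fin N) ℝ)
    (hsym : G.IsSymm) (hpsd : G.PosSemidef)
    (hGe : G.mulVec (fun _ => (1 : ℝ)) = 0)
    (hker : ∀ u : Fin N → ℝ, (∑ i, ∑ j, u i * G i j * u j) = 0 →
      ∃ c : ℝ, u = fun _ => c)
    (z : Fin N → ℝ) (hz : ∑ i, z i = 0) :
    BddAbove {r : ℝ | ∃ u : Fin N → ℝ,
      (∑ i, ∑ j, u i * G i j * u j) ≤ 1 ∧ r = ∑ i, z i * u i} := by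
  obtain ⟨m, hm0, hm⟩ := coercive hN G hpsd hker
  refine ⟨Real.sqrt ((∑ i, (z i) ^ 2) * m⁻¹), ?_⟩
  rintro r ⟨u, hu, rfl⟩
  have hN0 : (N : ℝ) ≠ 0 := by positivity
  set c : ℝ := (∑ i, u i) / N with hc
  set v : Fin N → ℝ := fun i => u i - c with hv
  have hvsum : ∑ i, v i = 0 := by
    simp only [hv, Finset.sum_sub_distrib, Finset.sum_const, Finset.card_univ,
      Fintype.card_fin, nsmul_eq_mul, hc]
    field_simp
    ring
  have hQv : quadQ G v = quadQ G u := by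
    have h := quadQ_shift G hsym hGe v c
    have : (fun i => v i + c) = u := by funext i; simp [hv]
    rw [this] at h; exact h.symm
  have huQ : quadQ G u ≤ 1 := hu
  have hv2 : ∑ i, (v i) ^ 2 ≤ m⁻¹ := by
    have h1 : m * (∑ i, (v i) ^ 2) ≤ 1 := by
      calc m * (∑ i, (v i) ^ 2) ≤ quadQ G v := hm v hvsum
        _ = quadQ G u := hQv
        _ ≤ 1 := huQ
    rw [← mul_le_mul_iff_right₀ hm0]
    calc m * (∑ i, (v i) ^ 2) ≤ 1 := h1
      _ = m * m⁻¹ := by field_simp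
  have hzu : ∑ i, z i * u i = ∑ i, z i * v i := by
    have : ∀ i, z i * u i = z i * v i + c * z i := fun i => by simp [hv]; ring
    simp only [this, Finset.sum_add_distrib, ← Finset.mul_sum, hz, mul_zero, add_zero]
  rw [hzu]
  have hcs : (∑ i, z i * v i) ^ 2 ≤ (∑ i, (z i) ^ 2) * (∑ i, (v i) ^ 2) :=
    Finset.sum_mul_sq_le_sq_mul_sq _ _ _
  have hb : (∑ i, z i * v i) ^ 2 ≤ (∑ i, (z i) ^ 2) * m⁻¹ := by
    refine hcs.trans (mul_le_mul_of_nonneg_left hv2 ?_)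
    exact Finset.sum_nonneg fun i _ => sq_nonneg _
  calc ∑ i, z i * v i ≤ |∑ i, z i * v i| := le_abs_self _
    _ = Real.sqrt ((∑ i, z i * v i) ^ 2) := (Real.sqrt_sq_eq_abs _).symm
    _ ≤ Real.sqrt ((∑ i, (z i) ^ 2) * m⁻¹) := Real.sqrt_le_sqrt hb

lemma fderiv_eq_sum {N : ℕ} (f : (Fin N → ℝ) → ℝ) (y v : Fin N → ℝ) :
    fderiv ℝ f y v = ∑ i, v i * gradVec N f y i := by
  have h := LinearMap.pi_apply_eq_sum_univ ((fderiv ℝ f y) : (Fin N → ℝ) →ₗ[ℝ] ℝ) v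
  rw [ContinuousLinearMap.coe_coe] at h
  rw [h]
  refine Finset.sum_congr rfl fun i _ => ?_
  rw [smul_eq_mul]
  congr 1
  have hsingle : (fun j => if i = j then (1:ℝ) else 0) = Pi.single i 1 := by
    funext j; simp [Pi.single_apply, eq_comm]
  rw [hsingle]
  rfl

lemma PL {N : ℕ} (hN : 2 ≤ N) (G : Matrix (Fin N) (Fin N) ℝ)
    (hsym : G.IsSymm) (hpsd : G.PosSemidef)
    (hGe : G.mulVec (fun _ => (1 : ℝ)) = 0)
    (hker : ∀ u : Fin N → ℝ, (∑ i, ∑ j, u i * G i j * u j) = 0 →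
      ∃ c : ℝ, u = fun _ => c)
    (σ : ℝ) (hσ0 : 0 < σ)
    (f : (Fin N → ℝ) → ℝ) (fstar : ℝ)
    (hattain : ∃ xs : Fin N → ℝ, (∑ i, xs i = 0) ∧ f xs = fstar ∧
      ∀ x : Fin N → ℝ, (∑ i, x i = 0) → fstar ≤ f x)
    (hsc : ∀ x y : Fin N → ℝ, (∑ i, x i = 0) → (∑ i, y i = 0) →
      f y + fderiv ℝ f y (x - y) + (σ / 2) *
        (sSup {r : ℝ | ∃ u : Fin N → ℝ,
          (∑ i, ∑ j, u i * G i j * u j) ≤ 1 ∧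
            r = ∑ i, (x i - y i) * u i}) ^ 2 ≤ f x)
    (y : Fin N → ℝ) (hy : ∑ i, y i = 0) :
    σ * (f y - fstar) ≤ (1 / 2) * quadQ G (gradVec N f y) := by
  obtain ⟨xs, hxs, hfxs, hmin⟩ := hattain
  set g : Fin N → ℝ := gradVec N f y with hg
  have hzsum : ∑ i, (xs i - y i) = 0 := by
    rw [Finset.sum_sub_distrib, hxs, hy]; ring
  have hbdd : BddAbove {r : ℝ | ∃ u : Fin N → ℝ,
      (∑ i, ∑ j, u i * G i j * u j) ≤ 1 ∧ r = ∑ i, (xs i - y i) * u i} :=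
    bddAbove_dualSet hN G hsym hpsd hGe hker (fun i => xs i - y i) hzsum
  set s : ℝ := sSup {r : ℝ | ∃ u : Fin N → ℝ,
      (∑ i, ∑ j, u i * G i j * u j) ≤ 1 ∧ r = ∑ i, (xs i - y i) * u i} with hsdef
  have hs0 : 0 ≤ s := by
    apply le_csSup hbdd
    exact ⟨fun _ => 0, by simp, by simp⟩
  have hD : fderiv ℝ f y (xs - y) = ∑ i, (xs i - y i) * g i := by
    rw [fderiv_eq_sum]
    exact Finset.sum_congr rfl fun i _ => by simp [hg]
  have hsc' : f y + (∑ i, (xs i - y i) * g i) + (σ / 2) * s ^ 2 ≤ fstar := by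
    have := hsc xs y hxs hy
    rw [hD] at this
    rw [← hfxs]
    exact this
  have hQg0 : 0 ≤ quadQ G g := quadQ_nonneg G hpsd g
  rcases eq_or_lt_of_le hQg0 with hQ0 | hQpos
  · -- degenerate: gradient is constant vector
    obtain ⟨c, hc⟩ := hker g hQ0.symm
    have hDz : (∑ i, (xs i - y i) * g i) = 0 := by
      rw [hc]
      rw [← Finset.sum_mul, hzsum, zero_mul]
    rw [hDz] at hsc'
    have hfy : f y - fstar ≤ 0 := by nlinarith [sq_nonneg s]
    have h2 : σ * (f y - fstar) ≤ 0 := mul_nonpos_iff.2 (Or.inl ⟨hσ0.le, hfy⟩)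
    rw [← hQ0]
    linarith
  · set t : ℝ := Real.sqrt (quadQ G g) with htdef
    have ht0 : 0 < t := Real.sqrt_pos.2 hQpos
    have ht2 : t ^ 2 = quadQ G g := Real.sq_sqrt hQg0
    have hQu₀ : quadQ G (fun i => -t⁻¹ * g i) = 1 := by
      rw [quadQ_smul, ← ht2]
      field_simp
    have hmem : (∑ i, (xs i - y i) * (-t⁻¹ * g i)) ≤ s := by
      apply le_csSup hbdd
      exact ⟨fun i => -t⁻¹ * g i, le_of_eq hQu₀, rfl⟩
    have hr₀ : (∑ i, (xs i - y i) * (-t⁻¹ * g i))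
        = -t⁻¹ * ∑ i, (xs i - y i) * g i := by
      rw [Finset.mul_sum]
      exact Finset.sum_congr rfl fun i _ => by ring
    rw [hr₀] at hmem
    -- -t⁻¹ * D' ≤ s  ⇒  -D' ≤ t * s
    have hD' : -(∑ i, (xs i - y i) * g i) ≤ t * s := by
      have := mul_le_mul_of_nonneg_left hmem ht0.le
      calc -(∑ i, (xs i - y i) * g i)
          = t * (-t⁻¹ * ∑ i, (xs i - y i) * g i) := by field_simp
        _ ≤ t * s := this
    nlinarith [sq_nonneg (σ * s - t), hσ0, hsc', hD', ht2]

theorem stmt_12 (N : ℕ) (hN : 2 ≤ N) (G : Matrix (Fin N) (Fin N) ℝ)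
    (hsym : G.IsSymm) (hpsd : G.PosSemidef)
    (hGe : G.mulVec (fun _ => (1 : ℝ)) = 0)
    (hker : ∀ u : Fin N → ℝ, (∑ i, ∑ j, u i * G i j * u j) = 0 →
      ∃ c : ℝ, u = fun _ => c)
    (σ : ℝ) (hσ0 : 0 < σ) (hσ1 : σ ≤ 1)
    (f : (Fin N → ℝ) → ℝ) (hdiff : Differentiable ℝ f)
    (fstar : ℝ)
    (hattain : ∃ xs : Fin N → ℝ, (∑ i, xs i = 0) ∧ f xs = fstar ∧
      ∀ x : Fin N → ℝ, (∑ i, x i = 0) → fstar ≤ f x)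
    (hsc : ∀ x y : Fin N → ℝ, (∑ i, x i = 0) → (∑ i, y i = 0) →
      f y + fderiv ℝ f y (x - y) + (σ / 2) *
        (sSup {r : ℝ | ∃ u : Fin N → ℝ,
          (∑ i, ∑ j, u i * G i j * u j) ≤ 1 ∧
            r = ∑ i, (x i - y i) * u i}) ^ 2 ≤ f x)
    {Ω : Type} [MeasurableSpace Ω] (μ : Measure Ω) [IsProbabilityMeasure μ]
    (𝓕 : Filtration ℕ ‹MeasurableSpace Ω›)
    (x0 : Fin N → ℝ) (hx0 : ∑ i, x0 i = 0)
    (X : ℕ → Ω → (Fin N → ℝ)) (hadapt : Adapted 𝓕 X)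
    (hX0 : ∀ᵐ ω ∂μ, X 0 ω = x0)
    (hint : ∀ k, Integrable (fun ω => f (X k ω)) μ)
    (hfeas : ∀ k, ∀ᵐ ω ∂μ, ∑ i, X k ω i = 0)
    (hexp : ∀ k, ∀ᵐ ω ∂μ,
      (μ[(fun ω' => f (X (k + 1) ω')) | 𝓕 k]) ω ≤ f (X k ω) -
        (1 / 2) * ∑ i, ∑ j,
          gradVec N f (X k ω) i * G i j * gradVec N f (X k ω) j) :
    ∀ k : ℕ, (∫ ω, f (X k ω) ∂μ) - fstar ≤ (1 - σ) ^ k * (f x0 - fstar) := by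
  have hPL := PL hN G hsym hpsd hGe hker σ hσ0 f fstar hattain hsc
  have hbase : (∫ ω, f (X 0 ω) ∂μ) = f x0 := by
    have hae0 : (fun ω => f (X 0 ω)) =ᵐ[μ] fun _ => f x0 := by
      filter_upwards [hX0] with ω h
      rw [h]
    rw [integral_congr_ae hae0]
    simp
  have hstep : ∀ k, (∫ ω, f (X (k+1) ω) ∂μ) - fstar
      ≤ (1 - σ) * ((∫ ω, f (X k ω) ∂μ) - fstar) := by
    intro k
    have hae : ∀ᵐ ω ∂μ, (μ[(fun ω' => f (X (k + 1) ω')) | 𝓕 k]) ω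
        ≤ f (X k ω) - σ * (f (X k ω) - fstar) := by
      filter_upwards [hexp k, hfeas k] with ω h1 h2
      have h3 := hPL (X k ω) h2
      have heq : quadQ G (gradVec N f (X k ω)) = ∑ i, ∑ j,
          gradVec N f (X k ω) i * G i j * gradVec N f (X k ω) j := rfl
      rw [heq] at h3
      linarith
    have hint2 : Integrable (fun ω => f (X k ω) - σ * (f (X k ω) - fstar)) μ :=
      (hint k).sub (((hint k).sub (integrable_const fstar)).const_mul σ)
    have h4 : ∫ ω, (μ[(fun ω' => f (X (k + 1) ω')) | 𝓕 k]) ω ∂μ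
        ≤ ∫ ω, (f (X k ω) - σ * (f (X k ω) - fstar)) ∂μ :=
      integral_mono_ae integrable_condExp hint2 hae
    rw [integral_condExp (𝓕.le k)] at h4
    have h5 : ∫ ω, (f (X k ω) - σ * (f (X k ω) - fstar)) ∂μ
        = (∫ ω, f (X k ω) ∂μ) - σ * ((∫ ω, f (X k ω) ∂μ) - fstar) := by
      have e1 : ∫ ω, (f (X k ω) - σ * (f (X k ω) - fstar)) ∂μ
          = ∫ ω, ((1 - σ) * f (X k ω) + σ * fstar) ∂μ := by
        congr 1; funext ω; ring
      rw [e1, integral_add ((hint k).const_mul _) (integrable_const _),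
        MeasureTheory.integral_const_mul, integral_const]
      simp only [probReal_univ, measure_univ, ENNReal.toReal_one, one_smul]
      ring
    rw [h5] at h4
    linarith
  intro k
  induction k with
  | zero => simp [hbase]
  | succ k ih =>
    calc (∫ ω, f (X (k+1) ω) ∂μ) - fstar
        ≤ (1 - σ) * ((∫ ω, f (X k ω) ∂μ) - fstar) := hstep k
      _ ≤ (1 - σ) * ((1 - σ) ^ k * (f x0 - fstar)) :=
          mul_le_mul_of_nonneg_left ih (by linarith)
      _ = (1 - σ) ^ (k+1) * (f x0 - fstar) := by ring
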